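/- Fix 0 ≤ β < 1 and define c_k^β = sum over j from 0 to k of β^{k-j} r_j r_{k-j} with r_j = binom(2j,j)/4^j. Then for all k ≥ 1, c_{k-1}^β - c_k^β ≥ (r_{k-1} - r_k)(1-β). -/
import Mathlib


noncomputable def r (j : ℕ) : ℝ := (Nat.choose (2*j) j : ℝ) / 4^j

noncomputable def c (β : ℝ) (k : ℕ) : ℝ :=
  ∑ j ∈ Finset.range (k + 1), β^(k - j) * r j * r (k - j)

lemma r_pos (j : ℕ) : 0 < r j := by
  unfold r
  apply div_pos
  · exact_mod_cast Nat.choose_pos (by omega)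
  · positivity

lemma r_zero : r 0 = 1 := by simp [r]

lemma r_one : r 1 = 1/2 := by norm_num [r]

lemma r_rec (j : ℕ) : (2*(j:ℝ)+2) * r (j+1) = (2*(j:ℝ)+1) * r j := by
  have h := Nat.succ_mul_centralBinom_succ j
  have h' : ((j:ℝ)+1) * ((2*(j+1)).choose (j+1)) = 2*(2*(j:ℝ)+1) * ((2*j).choose j) := by
    exact_mod_cast congrArg (Nat.cast (R := ℝ)) h
  unfold r
  rw [pow_succ, mul_div_assoc', mul_div_assoc', div_eq_div_iff (by positivity) (by positivity)]
  linear_combination (2:ℝ) * (4:ℝ)^j * h'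

lemma r_succ_le (j : ℕ) : r (j+1) ≤ r j := by
  have h := r_rec j
  have h1 := r_pos j
  have h2 := r_pos (j+1)
  have hj : (0:ℝ) ≤ j := Nat.cast_nonneg j
  nlinarith

lemma r_anti {i j : ℕ} (h : i ≤ j) : r j ≤ r i :=
  antitone_nat_of_succ_le r_succ_le h

lemma two_r_succ (j : ℕ) : r j ≤ 2 * r (j+1) := by
  have h := r_rec j
  have h1 := r_pos j
  have h2 := r_pos (j+1)
  have hj : (0:ℝ) ≤ j := Nat.cast_nonneg j
  nlinarith

lemma sym (p : ℕ) :
    2 * ∑ j ∈ Finset.range (p+1), (j:ℝ) * (r j * r (p-j))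
      = (p:ℝ) * ∑ j ∈ Finset.range (p+1), r j * r (p-j) := by
  have h := Finset.sum_range_reflect (fun j => (j:ℝ) * (r j * r (p-j))) (p+1)
  have h2 : ∑ j ∈ Finset.range (p+1), ((p:ℝ)-j) * (r j * r (p-j))
      = ∑ j ∈ Finset.range (p+1), (j:ℝ) * (r j * r (p-j)) := by
    rw [← h]
    apply Finset.sum_congr rfl
    intro j hj
    have hj' : j ≤ p := Nat.lt_succ_iff.mp (Finset.mem_range.mp hj)
    have e1 : p + 1 - 1 - j = p - j := by omega
    have e2 : p - (p - j) = j := by omega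
    simp only [e1, e2]
    have e3 : ((p - j : ℕ) : ℝ) = (p:ℝ) - j := by
      rw [Nat.cast_sub hj']
    rw [e3]; ring
  calc 2 * ∑ j ∈ Finset.range (p+1), (j:ℝ) * (r j * r (p-j))
      = ∑ j ∈ Finset.range (p+1), (j:ℝ) * (r j * r (p-j))
        + ∑ j ∈ Finset.range (p+1), ((p:ℝ)-j) * (r j * r (p-j)) := by rw [h2]; ring
    _ = ∑ j ∈ Finset.range (p+1), (p:ℝ) * (r j * r (p-j)) := by
        rw [← Finset.sum_add_distrib]
        exact Finset.sum_congr rfl fun j _ => by ring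
    _ = (p:ℝ) * ∑ j ∈ Finset.range (p+1), r j * r (p-j) := by rw [Finset.mul_sum]

lemma conv (n : ℕ) : ∑ j ∈ Finset.range (n+1), r j * r (n-j) = 1 := by
  induction n with
  | zero => simp [r]
  | succ m ih =>
    have key : ((m:ℝ)+1) * ∑ j ∈ Finset.range (m+1+1), r j * r (m+1-j)
        = ((m:ℝ)+1) * 1 := by
      calc ((m:ℝ)+1) * ∑ j ∈ Finset.range (m+1+1), r j * r (m+1-j)
          = 2 * ∑ j ∈ Finset.range (m+1+1), (j:ℝ) * (r j * r (m+1-j)) := by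
            rw [sym (m+1)]; push_cast; ring
        _ = 2 * ∑ i ∈ Finset.range (m+1), ((i:ℝ)+1) * (r (i+1) * r (m+1-(i+1))) := by
            rw [Finset.sum_range_succ' (fun j => (j:ℝ) * (r j * r (m+1-j))) (m+1)]
            simp only [Nat.cast_zero, zero_mul, add_zero, Nat.cast_add, Nat.cast_one]
        _ = ∑ i ∈ Finset.range (m+1), (2*(i:ℝ)+1) * (r i * r (m-i)) := by
            rw [Finset.mul_sum]
            apply Finset.sum_congr rfl
            intro i hi
            have e : m+1-(i+1) = m - i := by omega
            rw [e]
            linear_combination r (m-i) * r_rec i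
        _ = 2 * ∑ i ∈ Finset.range (m+1), (i:ℝ) * (r i * r (m-i))
            + ∑ i ∈ Finset.range (m+1), r i * r (m-i) := by
            rw [Finset.mul_sum, ← Finset.sum_add_distrib]
            exact Finset.sum_congr rfl fun i _ => by ring
        _ = (m:ℝ) * ∑ i ∈ Finset.range (m+1), r i * r (m-i)
            + ∑ i ∈ Finset.range (m+1), r i * r (m-i) := by rw [sym m]
        _ = ((m:ℝ)+1) * 1 := by rw [ih]; ring
    have hm : ((m:ℝ)+1) ≠ 0 := by positivity
    exact mul_left_cancel₀ hm key

lemma c_eq (β : ℝ) (k : ℕ) :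
    c β k = ∑ i ∈ Finset.range (k+1), β^i * (r i * r (k-i)) := by
  unfold c
  rw [← Finset.sum_range_reflect (fun i => β^i * (r i * r (k-i))) (k+1)]
  apply Finset.sum_congr rfl
  intro j hj
  have hj' : j ≤ k := Nat.lt_succ_iff.mp (Finset.mem_range.mp hj)
  have e1 : k + 1 - 1 - j = k - j := by omega
  have e2 : k - (k - j) = j := by omega
  simp only [e1, e2]
  ring

theorem stmt_10 (β : ℝ) (hβ0 : 0 ≤ β) (hβ1 : β < 1) (k : ℕ) (hk : 1 ≤ k) :
    c β (k - 1) - c β k ≥ (r (k - 1) - r k) * (1 - β) := by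
  obtain ⟨n, rfl⟩ : ∃ n, k = n + 1 := ⟨k-1, by omega⟩
  simp only [Nat.add_sub_cancel]
  have hb1 : β ≤ 1 := le_of_lt hβ1
  -- difference formula
  have hB : c β (n+1) = ∑ i ∈ Finset.range (n+1), β^i * (r i * r (n+1-i))
      + β^(n+1) * (r (n+1) * r 0) := by
    rw [c_eq, Finset.sum_range_succ]
    simp
  have hdiff : c β n - c β (n+1)
      = ∑ i ∈ Finset.range (n+1), β^i * (r i * (r (n-i) - r (n+1-i)))
        - β^(n+1) * r (n+1) := by
    rw [c_eq, hB, r_zero, mul_one]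
    rw [show (∑ i ∈ Finset.range (n+1), β^i * (r i * (r (n-i) - r (n+1-i))))
        = ∑ i ∈ Finset.range (n+1), (β^i * (r i * r (n-i)) - β^i * (r i * r (n+1-i)))
        from Finset.sum_congr rfl fun i _ => by ring]
    rw [Finset.sum_sub_distrib]
    ring
  have hpeel : ∑ i ∈ Finset.range (n+1), β^i * (r i * (r (n-i) - r (n+1-i)))
      = (∑ i ∈ Finset.range n, β^(i+1) * (r (i+1) * (r (n-(i+1)) - r (n-i))))
        + (r n - r (n+1)) := by
    rw [Finset.sum_range_succ' (fun i => β^i * (r i * (r (n-i) - r (n+1-i)))) n]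
    simp only [Nat.succ_sub_succ_eq_sub, pow_zero, Nat.sub_zero, one_mul, r_zero]
  -- exact value of the unweighted sum
  have hT : ∑ i ∈ Finset.range n, r (i+1) * (r (n-(i+1)) - r (n-i))
      = 2 * r (n+1) - r n := by
    have h1 := conv n
    have h2 := conv (n+1)
    rw [Finset.sum_range_succ' (fun j => r j * r (n-j)) n] at h1
    rw [Finset.sum_range_succ, Finset.sum_range_succ' (fun j => r j * r (n+1-j)) n] at h2
    simp only [Nat.succ_sub_succ_eq_sub, Nat.sub_zero, Nat.sub_self, r_zero, one_mul,
      mul_one] at h1 h2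
    have e : ∑ i ∈ Finset.range n, r (i+1) * (r (n-(i+1)) - r (n-i))
        = (∑ i ∈ Finset.range n, r (i+1) * r (n-(i+1)))
          - ∑ i ∈ Finset.range n, r (i+1) * r (n-i) := by
      rw [← Finset.sum_sub_distrib]
      exact Finset.sum_congr rfl fun i _ => by ring
    rw [e]
    linarith
  -- bound the weighted sum from below
  have hS : β^n * (2 * r (n+1) - r n)
      ≤ ∑ i ∈ Finset.range n, β^(i+1) * (r (i+1) * (r (n-(i+1)) - r (n-i))) := by
    rw [← hT, Finset.mul_sum]
    apply Finset.sum_le_sum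
    intro i hi
    have hi' : i + 1 ≤ n := Finset.mem_range.mp hi
    have hpow : β^n ≤ β^(i+1) := pow_le_pow_of_le_one hβ0 hb1 hi'
    have hd : 0 ≤ r (n-(i+1)) - r (n-i) :=
      sub_nonneg.2 (r_anti (by omega : n-(i+1) ≤ n-i))
    have hnn : 0 ≤ r (i+1) * (r (n-(i+1)) - r (n-i)) := mul_nonneg (r_pos _).le hd
    exact mul_le_mul_of_nonneg_right hpow hnn
  -- key scalar inequality
  have hkey : β^(n+1) * r (n+1) - β * (r n - r (n+1)) ≤ β^n * (2 * r (n+1) - r n) := by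
    rcases Nat.eq_zero_or_pos n with h0 | h0
    · subst h0
      norm_num [r_zero, r_one]
    · have hpn : β^n ≤ β := by
        calc β^n ≤ β^1 := pow_le_pow_of_le_one hβ0 hb1 h0
          _ = β := pow_one β
      have hpw : 0 ≤ β^n := pow_nonneg hβ0 n
      have hBn : 0 ≤ r n - r (n+1) := sub_nonneg.2 (r_succ_le n)
      have h1 : 0 ≤ (β - β^n) * (r n - r (n+1)) := mul_nonneg (by linarith) hBn
      have h2 : 0 ≤ β^n * (r (n+1) * (1 - β)) :=
        mul_nonneg hpw (mul_nonneg (r_pos _).le (by linarith))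
      rw [pow_succ]
      nlinarith [h1, h2]
  rw [ge_iff_le, hdiff, hpeel]
  nlinarith [hS, hkey]
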